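/- Let p > 5, 0 < λ ≤ 1, h(t) = (cos r(t))^{1−p}(cos(r(t)√(1−λ)))^{p+3}. Then ∫₀^s (t(π/2)² − p t²) h(t) dt → −∞ as s → t(π/2)⁻. -/

import Mathlib

open Real Set Filter MeasureTheory intervalIntegral

lemma stmt11_core {T c q : ℝ} (hT : 0 < T) (hc : 0 < c) (hq : q < -1)
    (f : ℝ → ℝ)
    (hint : ∀ s ∈ Set.Ico (0:ℝ) T, IntervalIntegrable f volume 0 s)
    (hbound : ∀ t ∈ Set.Ico (T/2) T, f t ≤ -c * (T - t) ^ q) :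
    Filter.Tendsto (fun s => ∫ t in (0:ℝ)..s, f t) (nhdsWithin T (Set.Iio T)) Filter.atBot := by
  have hT2 : (0:ℝ) ≤ T/2 := by linarith
  have hT2' : T/2 < T := by linarith
  have hq1 : q + 1 < 0 := by linarith
  set A : ℝ := ∫ t in (0:ℝ)..(T/2), f t with hA
  -- the comparison function
  set G : ℝ → ℝ := fun s => A + (-c) * (((T/2) ^ (q+1) - (T - s) ^ (q+1)) / (q+1)) with hG
  have hmem : ∀ᶠ s in nhdsWithin T (Set.Iio T), s ∈ Set.Ioo (T/2) T :=
    Ioo_mem_nhdsLT hT2'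
  have hle : ∀ᶠ s in nhdsWithin T (Set.Iio T), (∫ t in (0:ℝ)..s, f t) ≤ G s := by
    filter_upwards [hmem] with s hs
    have hs1 : T/2 ≤ s := hs.1.le
    have hs2 : s < T := hs.2
    have hi1 : IntervalIntegrable f volume 0 (T/2) := hint _ ⟨hT2, hT2'⟩
    have hi2 : IntervalIntegrable f volume 0 s := hint _ ⟨by linarith, hs2⟩
    have hi3 : IntervalIntegrable f volume (T/2) s := hi1.symm.trans hi2
    have hsplit : (∫ t in (0:ℝ)..s, f t) = A + ∫ t in (T/2)..s, f t := by
      rw [hA, intervalIntegral.integral_add_adjacent_intervals hi1 hi3]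
    have hcont : ContinuousOn (fun t : ℝ => -c * (T - t) ^ q) (Set.uIcc (T/2) s) := by
      rw [Set.uIcc_of_le hs1]
      apply ContinuousOn.mul continuousOn_const
      apply ContinuousOn.rpow_const (by fun_prop)
      intro x hx
      exact Or.inl (by simp only [sub_ne_zero]; exact (ne_of_gt (lt_of_le_of_lt hx.2 hs2)))
    have hi4 : IntervalIntegrable (fun t : ℝ => -c * (T - t) ^ q) volume (T/2) s :=
      hcont.intervalIntegrable
    have hmono : (∫ t in (T/2)..s, f t) ≤ ∫ t in (T/2)..s, -c * (T - t) ^ q := by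
      apply intervalIntegral.integral_mono_on hs1 hi3 hi4
      intro x hx
      exact hbound x ⟨hx.1, lt_of_le_of_lt hx.2 hs2⟩
    have hcomp : (∫ t in (T/2)..s, -c * (T - t) ^ q)
        = -c * (((T/2) ^ (q+1) - (T - s) ^ (q+1)) / (q+1)) := by
      rw [intervalIntegral.integral_const_mul]
      congr 1
      have := intervalIntegral.integral_comp_sub_left (a := T/2) (b := s)
        (fun u : ℝ => u ^ q) T
      rw [this]
      rw [integral_rpow]
      · rw [show T - T/2 = T/2 by ring]
      · right
        constructor
        · intro hq'; rw [hq'] at hq1; norm_num at hq1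
        · rw [Set.uIcc_of_le (by linarith)]
          intro hmem0
          have := hmem0.1
          linarith
    rw [hsplit, hG]
    simp only
    rw [← hcomp]
    linarith
  apply tendsto_atBot_mono' _ hle
  -- G tends to -∞
  have hX : Tendsto (fun s : ℝ => (T - s) ^ (q+1)) (nhdsWithin T (Set.Iio T)) atTop := by
    have h1 : Tendsto (fun s : ℝ => T - s) (nhdsWithin T (Set.Iio T)) (nhdsWithin 0 (Set.Ioi 0)) := by
      rw [tendsto_nhdsWithin_iff]
      constructor
      · have : Tendsto (fun s : ℝ => T - s) (nhds T) (nhds (T - T)) :=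
          (continuous_const.sub continuous_id).tendsto T
        simpa using this.mono_left nhdsWithin_le_nhds
      · filter_upwards [self_mem_nhdsWithin] with s hs
        simp only [Set.mem_Ioi, sub_pos]
        exact hs
    have h2 : Tendsto (fun x : ℝ => x⁻¹) (nhdsWithin 0 (Set.Ioi 0)) atTop :=
      tendsto_inv_nhdsGT_zero
    have h3 : Tendsto (fun x : ℝ => (x⁻¹) ^ (-(q+1))) (nhdsWithin 0 (Set.Ioi 0)) atTop :=
      (tendsto_rpow_atTop (by linarith)).comp h2
    have h4 : Tendsto (fun x : ℝ => x ^ (q+1)) (nhdsWithin 0 (Set.Ioi 0)) atTop := by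
      apply h3.congr'
      filter_upwards [self_mem_nhdsWithin] with x hx
      rw [Real.inv_rpow (le_of_lt hx), ← Real.rpow_neg (le_of_lt hx)]
      norm_num
    exact h4.comp h1
  have : Tendsto G (nhdsWithin T (Set.Iio T)) atBot := by
    have hGeq : G = fun s => (c/(q+1)) * (T - s) ^ (q+1) + (A + (-c/(q+1)) * (T/2)^(q+1)) := by
      funext s; rw [hG]; ring
    rw [hGeq]
    apply tendsto_atBot_add_const_right
    exact hX.const_mul_atTop_of_neg (div_neg_of_pos_of_neg hc hq1)
  exact this

set_option maxHeartbeats 1000000 in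
theorem stmt11 (p lam : ℝ) (hp : 5 < p) (hl0 : 0 < lam) (hl1 : lam ≤ 1)
    (tval : ℝ → ℝ)
    (htval : ∀ r, tval r = if lam = 1 then r
      else Real.tan (r * Real.sqrt (1 - lam)) / Real.sqrt (1 - lam))
    (ρ : ℝ → ℝ)
    (hρ : ∀ t ∈ Set.Ico 0 (tval (π/2)),
      ρ t ∈ Set.Ico 0 (π/2) ∧ tval (ρ t) = t)
    (h : ℝ → ℝ)
    (hh : ∀ t, h t = (Real.cos (ρ t)) ^ (1 - p)
      * (Real.cos (ρ t * Real.sqrt (1 - lam))) ^ (p + 3)) :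
    Filter.Tendsto (fun s => ∫ t in (0:ℝ)..s, ((tval (π/2))^2 - p * t^2) * h t)
      (nhdsWithin (tval (π/2)) (Set.Iio (tval (π/2)))) Filter.atBot := by
  have pi2 : (0:ℝ) < π/2 := by positivity
  have pi2' : (1:ℝ) ≤ π/2 := by nlinarith [pi_gt_three]
  set k := Real.sqrt (1 - lam) with hkdef
  have hk0 : 0 ≤ k := Real.sqrt_nonneg _
  have hk2 : k^2 = 1 - lam := Real.sq_sqrt (by linarith)
  have hk1 : k < 1 := by nlinarith
  set T := tval (π/2) with hTdef
  obtain ⟨hT0, ψ, hψc, hψeq, hkey⟩ : 0 < T ∧ ∃ ψ : ℝ → ℝ, Continuous ψ ∧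
      (∀ t ∈ Set.Ico (0:ℝ) T, ρ t = ψ t) ∧
      (∀ t ∈ Set.Ico (0:ℝ) T, Real.cos (ρ t) ≤ π/2 * (T - t)) := by
    by_cases hlam : lam = 1
    · have htv : ∀ r, tval r = r := by intro r; rw [htval]; simp [hlam]
      have hT : T = π/2 := by rw [hTdef, htv]
      refine ⟨by rw [hT]; positivity, id, continuous_id, ?_, ?_⟩
      · intro t ht
        have := (hρ t ht).2
        rwa [htv] at this
      · intro t ht
        obtain ⟨⟨h1, h2⟩, h3⟩ := hρ t ht
        rw [htv] at h3
        have hc1 : Real.cos (ρ t) ≤ π/2 - ρ t := by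
          rw [← Real.sin_pi_div_two_sub]
          exact Real.sin_le (by linarith)
        have hTt : T - t = π/2 - ρ t := by rw [hT, h3]
        rw [hTt]
        nlinarith
    · have hlam' : lam < 1 := lt_of_le_of_ne hl1 hlam
      have hk0' : 0 < k := Real.sqrt_pos.2 (by linarith)
      have ha : (π/2)*k < π/2 := by nlinarith
      have ha0 : 0 < (π/2)*k := by positivity
      have htv : ∀ r, tval r = Real.tan (r*k)/k := by
        intro r; rw [htval]; simp [hlam]
      have hT : T = Real.tan ((π/2)*k)/k := by rw [hTdef, htv]
      have htan0 : 0 < Real.tan ((π/2)*k) := Real.tan_pos_of_pos_of_lt_pi_div_two ha0 ha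
      refine ⟨by rw [hT]; positivity, fun t => Real.arctan (t*k)/k,
        (Real.continuous_arctan.comp (continuous_id.mul continuous_const)).div_const k, ?_, ?_⟩
      · intro t ht
        obtain ⟨⟨h1, h2⟩, h3⟩ := hρ t ht
        rw [htv] at h3
        have hbk : ρ t * k < π/2 := lt_of_le_of_lt (mul_le_of_le_one_right h1 hk1.le) h2
        have htn : Real.tan (ρ t * k) = t * k := by
          rw [div_eq_iff hk0'.ne'] at h3; linarith [h3]
        have : Real.arctan (t*k) = ρ t * k := by
          rw [← htn, Real.arctan_tan (by nlinarith [pi_pos]) hbk]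
        simp only [this]
        field_simp
      · intro t ht
        obtain ⟨⟨h1, h2⟩, h3⟩ := hρ t ht
        rw [htv] at h3
        set a := (π/2)*k with hadef
        set b := ρ t * k with hbdef
        have hb0 : 0 ≤ b := mul_nonneg h1 hk0
        have hba : b < a := mul_lt_mul_of_pos_right h2 hk0'
        have hcosa : 0 < Real.cos a := Real.cos_pos_of_mem_Ioo ⟨by linarith, ha⟩
        have hcosb : 0 < Real.cos b := Real.cos_pos_of_mem_Ioo ⟨by linarith, by linarith⟩
        have htt : T - t = (Real.tan a - Real.tan b)/k := by
          rw [hT, ← h3]; ring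
        have step1 : Real.tan a - Real.tan b = Real.sin (a - b) / (Real.cos a * Real.cos b) := by
          rw [Real.tan_eq_sin_div_cos, Real.tan_eq_sin_div_cos,
            div_sub_div _ _ hcosa.ne' hcosb.ne', Real.sin_sub]
        have hs0 : 0 ≤ Real.sin (a - b) :=
          Real.sin_nonneg_of_nonneg_of_le_pi (by linarith) (by nlinarith [pi_pos])
        have step2 : Real.sin (a - b) ≤ Real.tan a - Real.tan b := by
          rw [step1, le_div_iff₀ (by positivity)]
          have hab1 : Real.cos a * Real.cos b ≤ 1 :=
            mul_le_one₀ (Real.cos_le_one a) hcosb.le (Real.cos_le_one b)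
          exact mul_le_of_le_one_right hs0 hab1
        have step3 : 2/π * (a - b) ≤ Real.sin (a - b) :=
          Real.mul_le_sin (by linarith) (by linarith)
        have h5 : 2/π * (π/2 - ρ t) ≤ T - t := by
          rw [htt, le_div_iff₀ hk0']
          have hab : a - b = (π/2 - ρ t) * k := by rw [hadef, hbdef]; ring
          calc 2/π * (π/2 - ρ t) * k = 2/π * (a - b) := by rw [hab]; ring
            _ ≤ Real.sin (a - b) := step3
            _ ≤ Real.tan a - Real.tan b := step2
        have hc1 : Real.cos (ρ t) ≤ π/2 - ρ t := by
          rw [← Real.sin_pi_div_two_sub]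
          exact Real.sin_le (by linarith)
        have h6 : π/2 * (2/π * (π/2 - ρ t)) ≤ π/2 * (T - t) :=
          mul_le_mul_of_nonneg_left h5 pi2.le
        have h7 : π/2 * (2/π * (π/2 - ρ t)) = π/2 - ρ t := by
          field_simp
        linarith
  -- uniform part
  have hc₀pos : 0 < Real.cos ((π/2)*k) :=
    Real.cos_pos_of_mem_Ioo ⟨by nlinarith, by nlinarith⟩
  set c₀ := Real.cos ((π/2)*k) with hc₀def
  clear_value T k
  have hρmem : ∀ t ∈ Set.Ico (0:ℝ) T, ρ t ∈ Set.Ico (0:ℝ) (π/2) := fun t ht => (hρ t ht).1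
  have hρpos : ∀ t ∈ Set.Ico (0:ℝ) T, 0 < Real.cos (ρ t) := by
    intro t ht
    exact Real.cos_pos_of_mem_Ioo ⟨by linarith [(hρmem t ht).1], (hρmem t ht).2⟩
  have hcontf : ContinuousOn (fun t => (T^2 - p*t^2) * h t) (Set.Ico 0 T) := by
    have hg : ContinuousOn (fun t => (T^2 - p*t^2) *
        ((Real.cos (ψ t))^(1-p) * (Real.cos (ψ t * k))^(p+3))) (Set.Ico 0 T) := by
      apply ContinuousOn.mul (Continuous.continuousOn (by
        exact continuous_const.sub (continuous_const.mul (continuous_pow 2))))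
      apply ContinuousOn.mul
      · apply ContinuousOn.rpow_const (Continuous.continuousOn
          (Real.continuous_cos.comp hψc))
        intro t ht
        left
        simp only [Function.comp_apply]
        rw [← hψeq t ht]
        exact (hρpos t ht).ne'
      · apply ContinuousOn.rpow_const (Continuous.continuousOn
          (Real.continuous_cos.comp (hψc.mul continuous_const)))
        intro t ht
        right; linarith
    apply hg.congr
    intro t ht
    show (T^2 - p*t^2) * h t
      = (T^2 - p*t^2) * ((Real.cos (ψ t))^(1-p) * (Real.cos (ψ t * k))^(p+3))
    rw [hh, hψeq t ht]
  have hq : (1:ℝ) - p < -1 := by linarith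
  have hcpos : (0:ℝ) < ((p/4 - 1) * T^2) * (c₀^(p+3) * (π/2)^(1-p)) := by
    have h1 : (0:ℝ) < p/4 - 1 := by linarith
    have h2 : (0:ℝ) < c₀^(p+3) := Real.rpow_pos_of_pos hc₀pos _
    have h3 : (0:ℝ) < (π/2:ℝ)^(1-p) := Real.rpow_pos_of_pos pi2 _
    positivity
  apply stmt11_core hT0 hcpos hq
  · intro s hs
    apply (hcontf.mono _).intervalIntegrable
    rw [Set.uIcc_of_le hs.1]
    exact fun x hx => ⟨hx.1, lt_of_le_of_lt hx.2 hs.2⟩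
  · intro t ht
    have ht' : t ∈ Set.Ico (0:ℝ) T := ⟨by linarith [ht.1, hT0], ht.2⟩
    have h1 : 0 < Real.cos (ρ t) := hρpos t ht'
    have h2 : Real.cos (ρ t) ≤ π/2 * (T - t) := hkey t ht'
    have hTt : 0 < T - t := by linarith [ht.2]
    have hb1 : (π/2 * (T - t)) ^ (1-p) ≤ (Real.cos (ρ t)) ^ (1-p) :=
      Real.rpow_le_rpow_of_nonpos h1 h2 (by linarith)
    have hb2 : c₀ ^ (p+3) ≤ (Real.cos (ρ t * k)) ^ (p+3) := by
      apply Real.rpow_le_rpow hc₀pos.le _ (by linarith)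
      apply Real.cos_le_cos_of_nonneg_of_le_pi
      · exact mul_nonneg (hρmem t ht').1 hk0
      · nlinarith
      · exact mul_le_mul_of_nonneg_right (hρmem t ht').2.le hk0
    have hsplit : (π/2 * (T - t)) ^ (1-p) = (π/2:ℝ)^(1-p) * (T - t)^(1-p) :=
      Real.mul_rpow pi2.le hTt.le
    have hb1' : (π/2:ℝ)^(1-p) * (T - t)^(1-p) ≤ (Real.cos (ρ t)) ^ (1-p) :=
      hsplit ▸ hb1
    have hn1 : (0:ℝ) ≤ c₀^(p+3) := Real.rpow_nonneg hc₀pos.le _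
    have hn2 : (0:ℝ) ≤ (Real.cos (ρ t)) ^ (1-p) := Real.rpow_nonneg h1.le _
    have hht : ((π/2:ℝ)^(1-p) * (T - t)^(1-p)) * c₀^(p+3) ≤ h t := by
      rw [hh]
      exact mul_le_mul hb1' hb2 hn1 hn2
    have ht2 : T/2 * (T/2) ≤ t * t := mul_self_le_mul_self (by linarith [ht.1]) ht.1
    have hfactor : T^2 - p*t^2 ≤ -((p/4-1)*T^2) := by nlinarith [ht2]
    have hhpos : 0 ≤ h t := by
      refine le_trans ?_ hht
      have := Real.rpow_pos_of_pos hTt (1-p)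
      have := Real.rpow_pos_of_pos pi2 (1-p)
      have := Real.rpow_pos_of_pos hc₀pos (p+3)
      positivity
    have hneg : -((p/4-1)*T^2) ≤ 0 := by nlinarith
    calc (T^2 - p*t^2) * h t ≤ -((p/4-1)*T^2) * h t :=
          mul_le_mul_of_nonneg_right hfactor hhpos
      _ ≤ -((p/4-1)*T^2) * (((π/2:ℝ)^(1-p) * (T - t)^(1-p)) * c₀^(p+3)) :=
          mul_le_mul_of_nonpos_left hht hneg
      _ = -(((p/4 - 1) * T^2) * (c₀^(p+3) * (π/2:ℝ)^(1-p))) * (T-t)^(1-p) := by ring
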